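/- For every c ∈ (0, 1/2), K ≥ 2, and class-posterior vector η ∈ ℝ^K, the infimum over g ∈ ℝ^K of the pointwise conditional surrogate risk with the margin zero-one loss satisfies inf_{g ∈ ℝ^K} W_{ℓ01}(g; η) = ∑_{y=1}^K min(c·η_y, (1−c)·(1−η_y)) = min(c, 1 − max_y η_y); i.e., the minimal conditional cost-sensitive surrogate zero-one risk equals the Bayes conditional zero-one-c risk. -/
import Mathlib


open Classical

/-- The maximum of a function on `Fin K` (for `K > 0`). -/
noncomputable def vmax {K : ℕ} (hK : 0 < K) (f : Fin K → ℝ) : ℝ :=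
  Finset.univ.sup' ⟨⟨0, hK⟩, Finset.mem_univ _⟩ f

/-- The margin zero-one loss: `ℓ01(z) = 1` if `z ≤ 0` and `0` otherwise. -/
noncomputable def mloss01 (z : ℝ) : ℝ := if z ≤ 0 then 1 else 0

/-- The cost-sensitive surrogate loss `L_CS^φ(g, y) = c·φ(g_y) + (1−c)·∑_{y'≠y} φ(−g_{y'})`. -/
noncomputable def LCS {K : ℕ} (φ : ℝ → ℝ) (c : ℝ) (g : Fin K → ℝ) (y : Fin K) : ℝ :=
  c * φ (g y) + (1 - c) * ∑ y' ∈ Finset.univ.erase y, φ (-(g y'))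

/-- The pointwise conditional surrogate risk `W_φ(g; η) = ∑_y η_y · L_CS^φ(g, y)`. -/
noncomputable def Wrisk {K : ℕ} (φ : ℝ → ℝ) (c : ℝ) (g η : Fin K → ℝ) : ℝ :=
  ∑ y, η y * LCS φ c g y

lemma wrisk_eq {K : ℕ} (c : ℝ) (g η : Fin K → ℝ) (hη1 : ∑ y, η y = 1) :
    Wrisk mloss01 c g η =
      ∑ y, (c * η y * mloss01 (g y) + (1 - c) * (1 - η y) * mloss01 (-(g y))) := by
  unfold Wrisk LCS
  have key : ∀ y : Fin K,
      η y * (c * mloss01 (g y) + (1 - c) * ∑ y' ∈ Finset.univ.erase y, mloss01 (-(g y'))) =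
        c * η y * mloss01 (g y)
          + (1 - c) * (η y * (∑ y', mloss01 (-(g y'))) - η y * mloss01 (-(g y))) := by
    intro y
    rw [Finset.sum_erase_eq_sub (Finset.mem_univ y)]
    ring
  rw [Finset.sum_congr rfl fun y _ => key y, Finset.sum_add_distrib, ← Finset.mul_sum]
  rw [Finset.sum_sub_distrib, ← Finset.sum_mul, hη1, one_mul, mul_sub]
  conv_rhs => rw [Finset.sum_congr rfl (fun y _ => (by ring :
      c * η y * mloss01 (g y) + (1 - c) * (1 - η y) * mloss01 (-(g y)) =
        c * η y * mloss01 (g y) +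
          ((1 - c) * mloss01 (-(g y)) - (1 - c) * (η y * mloss01 (-(g y)))))),
    Finset.sum_add_distrib, Finset.sum_sub_distrib, ← Finset.mul_sum, ← Finset.mul_sum]

/-- The infimum over score vectors of the pointwise conditional surrogate risk with
the margin zero-one loss equals `∑_y min(c·η_y, (1−c)(1−η_y))`, which in turn equals
the Bayes conditional zero-one-c risk `min(c, 1 − max_y η_y)`. -/
theorem stmt10 (c : ℝ) (hc0 : 0 < c) (hc : c < 1/2) (K : ℕ) (hK : 2 ≤ K)
    (η : Fin K → ℝ) (hη0 : ∀ y, 0 ≤ η y) (hη1 : ∑ y, η y = 1) :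
    sInf {r : ℝ | ∃ g : Fin K → ℝ, r = Wrisk mloss01 c g η} =
      ∑ y, min (c * η y) ((1 - c) * (1 - η y)) ∧
    ∑ y, min (c * η y) ((1 - c) * (1 - η y)) = min c (1 - vmax (by omega) η) := by
  have hle1 : ∀ y, η y ≤ 1 := by
    intro y
    calc η y ≤ ∑ y', η y' := Finset.single_le_sum (fun y' _ => hη0 y') (Finset.mem_univ y)
      _ = 1 := hη1
  set M := ∑ y, min (c * η y) ((1 - c) * (1 - η y)) with hM
  -- lower bound
  have hlow : ∀ g : Fin K → ℝ, M ≤ Wrisk mloss01 c g η := by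
    intro g
    rw [wrisk_eq c g η hη1]
    refine Finset.sum_le_sum fun y _ => ?_
    have h0 : 0 ≤ c * η y := mul_nonneg hc0.le (hη0 y)
    have h1 : 0 ≤ (1 - c) * (1 - η y) := mul_nonneg (by linarith) (by linarith [hle1 y])
    by_cases hg : g y ≤ 0
    · have : mloss01 (g y) = 1 := if_pos hg
      rw [this]
      have hm : 0 ≤ mloss01 (-(g y)) := by unfold mloss01; split <;> norm_num
      calc min (c * η y) ((1 - c) * (1 - η y)) ≤ c * η y := min_le_left _ _
        _ ≤ c * η y * 1 + (1 - c) * (1 - η y) * mloss01 (-(g y)) := by nlinarith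
    · have h2 : mloss01 (g y) = 0 := if_neg hg
      have h3 : mloss01 (-(g y)) = 1 := if_pos (by linarith [lt_of_not_ge hg])
      rw [h2, h3]
      calc min (c * η y) ((1 - c) * (1 - η y)) ≤ (1 - c) * (1 - η y) := min_le_right _ _
        _ = c * η y * 0 + (1 - c) * (1 - η y) * 1 := by ring
  -- attained
  have hatt : ∃ g : Fin K → ℝ, Wrisk mloss01 c g η = M := by
    refine ⟨fun y => if c * η y ≤ (1 - c) * (1 - η y) then -1 else 1, ?_⟩
    rw [wrisk_eq _ _ _ hη1]
    refine Finset.sum_congr rfl fun y _ => ?_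
    by_cases h : c * η y ≤ (1 - c) * (1 - η y)
    · have e1 : mloss01 (-1 : ℝ) = 1 := if_pos (by norm_num)
      have e2 : mloss01 (-(-1 : ℝ)) = 0 := if_neg (by norm_num)
      rw [if_pos h, e1, e2, min_eq_left h]; ring
    · have e1 : mloss01 (1 : ℝ) = 0 := if_neg (by norm_num)
      have e2 : mloss01 (-(1 : ℝ)) = 1 := if_pos (by norm_num)
      rw [if_neg h, e1, e2, min_eq_right (le_of_not_ge h)]; ring
  obtain ⟨g0, hg0⟩ := hatt
  constructor
  · apply le_antisymm
    · exact csInf_le ⟨M, fun r ⟨g, hg⟩ => hg ▸ hlow g⟩ ⟨g0, hg0.symm⟩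
    · exact le_csInf ⟨_, g0, rfl⟩ fun r ⟨g, hg⟩ => hg ▸ hlow g
  -- second part
  have hK0 : 0 < K := by omega
  set V := vmax (by omega : (0:ℕ) < K) η with hV
  have hVle : ∀ y, η y ≤ V := fun y => Finset.le_sup' η (Finset.mem_univ y)
  obtain ⟨y0, -, hy0⟩ := Finset.exists_mem_eq_sup' ⟨⟨0, hK0⟩, Finset.mem_univ _⟩ η
  by_cases hcase : V ≤ 1 - c
  · have hall : ∀ y, min (c * η y) ((1 - c) * (1 - η y)) = c * η y := by
      intro y
      apply min_eq_left
      nlinarith [hVle y, hη0 y]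
    rw [hM, Finset.sum_congr rfl fun y _ => hall y, ← Finset.mul_sum, hη1, mul_one]
    rw [min_eq_left (by linarith)]
  · push_neg at hcase
    have hy0V : η y0 = V := hy0.symm
    have herase : ∑ y ∈ Finset.univ.erase y0, η y = 1 - η y0 := by
      rw [Finset.sum_erase_eq_sub (Finset.mem_univ y0), hη1]
    have hsmall : ∀ y ∈ Finset.univ.erase y0, η y ≤ 1 - V := by
      intro y hy
      calc η y ≤ ∑ y' ∈ Finset.univ.erase y0, η y' :=
            Finset.single_le_sum (fun y' _ => hη0 y') hy
        _ = 1 - V := by rw [herase, hy0V]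
    rw [hM, ← Finset.sum_erase_add _ _ (Finset.mem_univ y0)]
    have hterm0 : min (c * η y0) ((1 - c) * (1 - η y0)) = (1 - c) * (1 - η y0) := by
      apply min_eq_right
      nlinarith [hy0V]
    have hterms : ∀ y ∈ Finset.univ.erase y0,
        min (c * η y) ((1 - c) * (1 - η y)) = c * η y := by
      intro y hy
      apply min_eq_left
      have := hsmall y hy
      nlinarith
    rw [hterm0, Finset.sum_congr rfl hterms, ← Finset.mul_sum, herase, hy0V]
    rw [min_eq_right (by linarith)]
    ring
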